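/- Let x, y, u, v be differentiable complex-valued functions of a real parameter with u^2 = P(x), v^2 = P(y), and suppose Φ_θ(x(t),y(t)) = 0 identically for some fixed θ with p(θ) ≠ 0, where the partial derivatives satisfy (1/2)∂Φ_θ/∂x = ρ√(G_θ(y)) and (1/2)∂Φ_θ/∂y = σ√(G_θ(x)) with ρ,σ ∈ {±1}. Then along the curve, σ·(dx/dt)/u + ρ·(dy/dt)/v = 0, i.e. the curve Φ_θ = 0 solves dx/√P(x) ± dy/√P(y) = 0. -/

import Mathlib

/-- Derivative of a quadratic polynomial. -/
lemma quadDeriv (k0 k1 k2 a : ℂ) :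
    HasDerivAt (fun s : ℂ => k0 + k1*s + k2*s^2) (k1 + 2*k2*a) a := by
  have h : HasDerivAt (fun s : ℂ => k0 + k1*s + k2*s^2)
      (0 + k1*1 + k2*(2*a^1)) a := by
    exact ((hasDerivAt_const a k0).add ((hasDerivAt_id a).const_mul k1)).add
      ((hasDerivAt_pow 2 a).const_mul k2)
  convert h using 1
  ring

theorem euler_differential_relation (A B C D E θ ρ σ sp : ℂ)
    (Φ : ℂ → ℂ → ℂ) (P : ℂ → ℂ)
    (x y u v : ℝ → ℂ)
    (hP : ∀ t, P t = A + 4*B*t + 6*C*t^2 + 4*D*t^3 + E*t^4)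
    (hΦ : ∀ s t, Φ s t = -(s - t)^2*θ^2
        + 2*(A + 2*B*(s + t) + 3*C*(s^2 + t^2) + 2*D*(s*t)*(s + t) + E*s^2*t^2)*θ
        + (-4*B^2 + 4*(A*D - 3*B*C)*(s + t) + 2*(A*E + 2*B*D - 9*C^2)*(s^2 + t^2)
            + 4*(B*E - 3*C*D)*(s*t)*(s + t) - 4*D^2*s^2*t^2
            - (A*E + 4*B*D - 9*C^2)*(s - t)^2))
    (hρ : ρ^2 = 1) (hσ : σ^2 = 1)
    (hsp : sp^2 = 2*θ*(θ - 3*C)^2 + 2*θ*(4*B*D - A*E) + 4*B^2*E + 4*A*D^2 - 24*B*C*D)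
    (hp : 2*θ*(θ - 3*C)^2 + 2*θ*(4*B*D - A*E) + 4*B^2*E + 4*A*D^2 - 24*B*C*D ≠ 0)
    (hx : Differentiable ℝ x) (hy : Differentiable ℝ y)
    (hu2 : ∀ t, (u t)^2 = P (x t)) (hv2 : ∀ t, (v t)^2 = P (y t))
    (hu0 : ∀ t, u t ≠ 0) (hv0 : ∀ t, v t ≠ 0)
    (hcurve : ∀ t, Φ (x t) (y t) = 0)
    (hdx : ∀ t, (1/2) * deriv (fun s => Φ s (y t)) (x t) = ρ * (sp * v t))
    (hdy : ∀ t, (1/2) * deriv (fun s => Φ (x t) s) (y t) = σ * (sp * u t)) :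
    ∀ t, σ * (deriv x t) / u t + ρ * (deriv y t) / v t = 0 := by
  -- biquadratic coefficients of Φ
  set c00 : ℂ := 2*A*θ - 4*B^2 with hc00
  set c01 : ℂ := 4*B*θ - 12*B*C + 4*A*D with hc01
  set c02 : ℂ := -θ^2 + 6*C*θ - 9*C^2 + A*E with hc02
  set c11 : ℂ := 2*θ^2 - 18*C^2 + 8*B*D + 2*A*E with hc11
  set c12 : ℂ := 4*D*θ - 12*C*D + 4*B*E with hc12
  set c22 : ℂ := 2*E*θ - 4*D^2 with hc22
  have hΦ' : ∀ s t : ℂ, Φ s t =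
      (c00 + c01*t + c02*t^2) + (c01 + c11*t + c12*t^2)*s
        + (c02 + c12*t + c22*t^2)*s^2 := by
    intro s t
    rw [hΦ]
    simp only [hc00, hc01, hc02, hc11, hc12, hc22]
    ring
  intro t
  have hsp0 : sp ≠ 0 := by
    intro h
    apply hp
    rw [← hsp, h]
    norm_num
  have hρ0 : ρ ≠ 0 := by
    intro h; rw [h] at hρ; norm_num at hρ
  have hσ0 : σ ≠ 0 := by
    intro h; rw [h] at hσ; norm_num at hσ
  have hxt := (hx t).hasDerivAt
  have hyt := (hy t).hasDerivAt
  set a := x t with ha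
  set b := y t with hb
  set xd := deriv x t with hxd
  set yd := deriv y t with hyd
  -- partial derivative in the first variable
  have hQ : HasDerivAt (fun s => Φ s b)
      ((c01 + c11*b + c12*b^2) + 2*(c02 + c12*b + c22*b^2)*a) a := by
    have he : (fun s => Φ s b) = fun s =>
        (c00 + c01*b + c02*b^2) + ((c01 + c11*b + c12*b^2))*s
          + ((c02 + c12*b + c22*b^2))*s^2 := funext fun s => by rw [hΦ' s b]
    rw [he]
    exact quadDeriv _ _ _ a
  -- partial derivative in the second variable
  have hR : HasDerivAt (fun s => Φ a s)
      ((c01 + c11*a + c12*a^2) + 2*(c02 + c12*a + c22*a^2)*b) b := by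
    have he : (fun s => Φ a s) = fun s =>
        (c00 + c01*a + c02*a^2) + ((c01 + c11*a + c12*a^2))*s
          + ((c02 + c12*a + c22*a^2))*s^2 := funext fun s => by rw [hΦ' a s]; ring
    rw [he]
    exact quadDeriv _ _ _ b
  have hd1 : (c01 + c11*b + c12*b^2) + 2*(c02 + c12*b + c22*b^2)*a
      = 2*(ρ*(sp * v t)) := by
    have h1 := hQ.deriv
    have h2 := hdx t
    rw [← hb, ← ha] at h2
    rw [h1] at h2
    linear_combination 2*h2
  have hd2 : (c01 + c11*a + c12*a^2) + 2*(c02 + c12*a + c22*a^2)*b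
      = 2*(σ*(sp * u t)) := by
    have h1 := hR.deriv
    have h2 := hdy t
    rw [← hb, ← ha] at h2
    rw [h1] at h2
    linear_combination 2*h2
  -- total derivative of t ↦ Φ (x t) (y t)
  have hA0 : HasDerivAt (fun τ => c00 + c01*(y τ) + c02*(y τ)^2)
      ((c01 + 2*c02*b)*yd) t := (quadDeriv c00 c01 c02 b).comp t hyt
  have hA1 : HasDerivAt (fun τ => c01 + c11*(y τ) + c12*(y τ)^2)
      ((c11 + 2*c12*b)*yd) t := (quadDeriv c01 c11 c12 b).comp t hyt
  have hA2 : HasDerivAt (fun τ => c02 + c12*(y τ) + c22*(y τ)^2)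
      ((c12 + 2*c22*b)*yd) t := (quadDeriv c02 c12 c22 b).comp t hyt
  have htot : HasDerivAt (fun τ => Φ (x τ) (y τ))
      ((c01 + 2*c02*b)*yd
        + (xd * (c01 + c11*b + c12*b^2) + a * ((c11 + 2*c12*b)*yd))
        + ((2*a^1*xd) * (c02 + c12*b + c22*b^2) + a^2 * ((c12 + 2*c22*b)*yd))) t := by
    have he : (fun τ => Φ (x τ) (y τ)) = fun τ =>
        (c00 + c01*(y τ) + c02*(y τ)^2)
          + (x τ) * (c01 + c11*(y τ) + c12*(y τ)^2)
          + (x τ)^2 * (c02 + c12*(y τ) + c22*(y τ)^2) :=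
      funext fun τ => by rw [hΦ' (x τ) (y τ)]; ring
    rw [he]
    have hx2 : HasDerivAt (fun τ => (x τ)^2) (xd * x t + x t * xd) t := by
      have heq : (fun τ => (x τ)^2) = fun τ => x τ * x τ := funext fun τ => sq (x τ)
      rw [heq]
      exact hxt.mul hxt
    have h := (hA0.add (hxt.mul hA1)).add (hx2.mul hA2)
    exact (h.congr_of_eventuallyEq (Filter.Eventually.of_forall fun τ => rfl)).congr_deriv (by ring)
  have hzero : (c01 + 2*c02*b)*yd
        + (xd * (c01 + c11*b + c12*b^2) + a * ((c11 + 2*c12*b)*yd))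
        + ((2*a^1*xd) * (c02 + c12*b + c22*b^2) + a^2 * ((c12 + 2*c22*b)*yd)) = 0 := by
    have hconst : (fun τ => Φ (x τ) (y τ)) = fun _ => (0:ℂ) := funext fun τ => hcurve τ
    have hd := htot.deriv
    rw [hconst] at hd
    simp at hd
    linear_combination -hd
  -- combine: 2ρ sp v * xd + 2σ sp u * yd = 0
  have hcomb : ρ * (sp * v t) * xd + σ * (sp * u t) * yd = 0 := by
    linear_combination (1/2 : ℂ) * hzero - (xd/2) * hd1 - (yd/2) * hd2
  have hu := hu0 t
  have hv := hv0 t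
  have hkey0 : sp * (σ * v t * xd + ρ * u t * yd) = sp * 0 := by
    linear_combination ρ*σ*hcomb + (-sp*σ*(v t)*xd)*hρ + (-sp*ρ*(u t)*yd)*hσ
  have hkey : σ * v t * xd + ρ * u t * yd = 0 := mul_left_cancel₀ hsp0 hkey0
  field_simp
  linear_combination hkey
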